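/- Let (X, μ) be a measure space, let A, B : X → ℝ be bounded measurable functions, let η ∈ L²(X, μ; ℂ), and let λ ∈ ℂ with Im λ ≠ 0. Suppose the integral I = ∫_X B(x)/(λ − A(x)) · |η(x)|² dμ(x) is a real number and I < 0. Then: (i) ∫_X B(x)/|λ − A(x)|² · |η(x)|² dμ(x) = 0; (ii) for every K ∈ ℝ, ∫_X B(x)(K − A(x))/|λ − A(x)|² · |η(x)|² dμ(x) = I < 0; and (iii) the sets {x ∈ X : B(x) > 0 and η(x) ≠ 0} and {x ∈ X : B(x) < 0 and η(x) ≠ 0} both have positive μ-measure. -/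

import Mathlib

open MeasureTheory Complex

/-- The analytic heart of Propositions 4.2.3 and 4.3.3 (Rayleigh and Fjortoft
necessary conditions): if `Im λ ≠ 0` and the integral
`I = ∫ B(x)/(λ - A(x)) |η(x)|² dμ` is a (negative) real number, then
(i) `∫ B/|λ-A|² |η|² dμ = 0`, (ii) `∫ B(K-A)/|λ-A|² |η|² dμ = I < 0` for every real `K`,
and (iii) `B` takes both signs on a set of positive measure where `η ≠ 0`. -/
theorem rayleigh_fjortoft_necessary_conditions
    {X : Type*} [MeasurableSpace X] (μ : Measure X)
    (A B : X → ℝ) (hAmeas : Measurable A) (hBmeas : Measurable B)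
    (hAbdd : ∃ C : ℝ, ∀ x, |A x| ≤ C) (hBbdd : ∃ C : ℝ, ∀ x, |B x| ≤ C)
    (η : X → ℂ) (hη : MemLp η 2 μ)
    (lam : ℂ) (hlam : lam.im ≠ 0) (I : ℝ) (hIneg : I < 0)
    (hI : ∫ x, (B x : ℂ) / (lam - (A x : ℂ)) * ((‖η x‖ : ℂ)) ^ 2 ∂μ = (I : ℂ)) :
    (∫ x, B x / ‖lam - (A x : ℂ)‖ ^ 2 * ‖η x‖ ^ 2 ∂μ = 0) ∧
    (∀ K : ℝ,
      ∫ x, B x * (K - A x) / ‖lam - (A x : ℂ)‖ ^ 2 * ‖η x‖ ^ 2 ∂μ = I) ∧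
    0 < μ {x | 0 < B x ∧ η x ≠ 0} ∧ 0 < μ {x | B x < 0 ∧ η x ≠ 0} := by
  obtain ⟨CA, hCA⟩ := hAbdd
  obtain ⟨CB, hCB⟩ := hBbdd
  set CA' := max CA 0 with hCA'def
  set CB' := max CB 0 with hCB'def
  have hCA' : ∀ x, |A x| ≤ CA' := fun x => (hCA x).trans (le_max_left _ _)
  have hCB' : ∀ x, |B x| ≤ CB' := fun x => (hCB x).trans (le_max_left _ _)
  have hCA0 : (0:ℝ) ≤ CA' := le_max_right _ _
  have hCB0 : (0:ℝ) ≤ CB' := le_max_right _ _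
  -- basic pointwise facts
  have him2 : 0 < lam.im ^ 2 := by positivity
  have hns : ∀ x, lam.im ^ 2 ≤ Complex.normSq (lam - (A x : ℂ)) := by
    intro x
    have : Complex.normSq (lam - (A x : ℂ))
        = (lam.re - A x) ^ 2 + lam.im ^ 2 := by
      simp [Complex.normSq_apply, Complex.sub_re, Complex.sub_im]; ring
    nlinarith [sq_nonneg (lam.re - A x)]
  have hnspos : ∀ x, 0 < Complex.normSq (lam - (A x : ℂ)) := fun x =>
    lt_of_lt_of_le him2 (hns x)
  have hne : ∀ x, lam - (A x : ℂ) ≠ 0 := by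
    intro x h
    have := hnspos x
    rw [h] at this
    simp at this
  -- integrability of |η|²
  have hη2 : Integrable (fun x => ‖η x‖ ^ 2) μ := by
    have := hη.norm.integrable_sq
    simpa using this
  -- key integrability helper
  have key : ∀ (φ : X → ℝ), AEStronglyMeasurable φ μ → (∃ C, ∀ x, |φ x| ≤ C) →
      Integrable (fun x => φ x * ‖η x‖ ^ 2) μ := by
    intro φ hφ ⟨C, hC⟩
    exact hη2.bdd_mul (c := C) hφ (Filter.Eventually.of_forall fun x => by simpa using hC x)
  set G : X → ℝ := fun x => B x / Complex.normSq (lam - (A x : ℂ)) * ‖η x‖ ^ 2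
    with hGdef
  set HRe : X → ℝ := fun x =>
    B x * (lam.re - A x) / Complex.normSq (lam - (A x : ℂ)) * ‖η x‖ ^ 2
    with hHdef
  have hnsm : Measurable fun x => Complex.normSq (lam - (A x : ℂ)) :=
    Complex.continuous_normSq.measurable.comp
      (measurable_const.sub (Complex.measurable_ofReal.comp hAmeas))
  have hGint : Integrable G μ := by
    apply key _ (hBmeas.div hnsm).aestronglyMeasurable
    refine ⟨CB' / lam.im ^ 2, fun x => ?_⟩
    simp only [Pi.div_apply]
    rw [abs_div, abs_of_pos (hnspos x)]
    exact div_le_div₀ hCB0 (hCB' x) him2 (hns x)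
  have hHint : Integrable HRe μ := by
    apply key _ ((hBmeas.mul (measurable_const.sub hAmeas)).div hnsm).aestronglyMeasurable
    refine ⟨CB' * (|lam.re| + CA') / lam.im ^ 2, fun x => ?_⟩
    simp only [Pi.div_apply, Pi.mul_apply, Pi.sub_apply]
    rw [abs_div, abs_of_pos (hnspos x)]
    apply div_le_div₀ _ _ him2 (hns x)
    · positivity
    · rw [abs_mul]
      have h1 : |lam.re - A x| ≤ |lam.re| + CA' :=
        (abs_sub _ _).trans (by linarith [hCA' x])
      exact mul_le_mul (hCB' x) h1 (abs_nonneg _) hCB0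
  -- the complex integrand
  set F : X → ℂ := fun x => (B x : ℂ) / (lam - (A x : ℂ)) * ((‖η x‖ : ℂ)) ^ 2
    with hFdef
  have hFim : ∀ x, (F x).im = -lam.im * G x := by
    intro x
    simp only [hFdef, hGdef, div_eq_mul_inv, Complex.mul_im, Complex.mul_re,
      Complex.inv_im, Complex.inv_re, Complex.sub_im, Complex.sub_re,
      Complex.ofReal_im, Complex.ofReal_re, pow_two]
    field_simp
    try ring
  have hFre : ∀ x, (F x).re = HRe x := by
    intro x
    simp only [hFdef, hHdef, div_eq_mul_inv, Complex.mul_im, Complex.mul_re,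
      Complex.inv_im, Complex.inv_re, Complex.sub_im, Complex.sub_re,
      Complex.ofReal_im, Complex.ofReal_re, pow_two]
    field_simp
    try ring
  have hFint : Integrable F μ := by
    have hFm : AEStronglyMeasurable F μ := by
      apply AEStronglyMeasurable.mul
      · exact ((Complex.measurable_ofReal.comp hBmeas).div
          (measurable_const.sub (Complex.measurable_ofReal.comp hAmeas))).aestronglyMeasurable
      · exact ((Complex.continuous_ofReal.comp_aestronglyMeasurable
          (by simpa using hη.aestronglyMeasurable.norm)).pow 2)
    apply Integrable.mono' (hη2.const_mul (CB' / |lam.im|)) hFm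
    filter_upwards with x
    have habs : |lam.im| ≤ ‖lam - (A x : ℂ)‖ := by
      simpa using Complex.abs_im_le_norm (lam - (A x : ℂ))
    have habspos : (0:ℝ) < |lam.im| := abs_pos.mpr hlam
    have hle : |B x| / ‖lam - (A x : ℂ)‖ ≤ CB' / |lam.im| :=
      div_le_div₀ hCB0 (hCB' x) habspos habs
    calc ‖F x‖ = |B x| / ‖lam - (A x : ℂ)‖ * ‖η x‖ ^ 2 := by
          simp only [hFdef, norm_mul, norm_div, norm_pow, Complex.norm_real,
            Real.norm_eq_abs, _root_.abs_abs, norm_norm, abs_norm]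
      _ ≤ CB' / |lam.im| * ‖η x‖ ^ 2 :=
          mul_le_mul_of_nonneg_right hle (by positivity)
  -- part (i)
  have hGzero : ∫ x, G x ∂μ = 0 := by
    have him : ∫ x, (F x).im ∂μ = 0 := by
      rw [show (fun x => (F x).im) = fun x => RCLike.im (F x) from rfl]
      rw [integral_im hFint, hFdef]
      rw [hI]; simp
    have h0 : ∫ x, -lam.im * G x ∂μ = 0 := by
      rw [← him]
      exact integral_congr_ae (Filter.Eventually.of_forall fun x => (hFim x).symm)
    rw [integral_const_mul] at h0
    rcases mul_eq_zero.mp h0 with h | h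
    · exact absurd (neg_eq_zero.mp h) hlam
    · exact h
  have hHI : ∫ x, HRe x ∂μ = I := by
    have hre : ∫ x, (F x).re ∂μ = I := by
      rw [show (fun x => (F x).re) = fun x => RCLike.re (F x) from rfl]
      rw [integral_re hFint, hFdef, hI]; simp
    rw [← hre]
    exact integral_congr_ae (Filter.Eventually.of_forall fun x => (hFre x).symm)
  -- helper: G = 0 a.e. leads to a contradiction
  have contra : (∀ᵐ x ∂μ, G x = 0) → False := by
    intro hGzeroae
    have hHzero : ∀ᵐ x ∂μ, HRe x = 0 := by
      filter_upwards [hGzeroae] with x hx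
      have hB : B x * ‖η x‖ ^ 2 = 0 := by
        rw [hGdef] at hx
        rcases mul_eq_zero.mp hx with h | h
        · rw [div_eq_zero_iff] at h
          rcases h with h | h
          · rw [h, zero_mul]
          · exact absurd h (hnspos x).ne'
        · rw [h, mul_zero]
      simp only [hHdef]
      rw [show B x * (lam.re - A x) / Complex.normSq (lam - (A x:ℂ)) * ‖η x‖ ^ 2
        = (lam.re - A x) / Complex.normSq (lam - (A x:ℂ)) * (B x * ‖η x‖ ^ 2) by
          ring, hB, mul_zero]
    have : I = 0 := by
      rw [← hHI]
      exact integral_eq_zero_of_ae hHzero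
    linarith
  refine ⟨?_, ?_, ?_, ?_⟩
  · rw [show (fun x => B x / ‖lam - (A x : ℂ)‖ ^ 2 * ‖η x‖ ^ 2) = G from
      funext fun x => by rw [hGdef]; simp [Complex.sq_norm]]
    exact hGzero
  · intro K
    have heq : (fun x => B x * (K - A x) / ‖lam - (A x : ℂ)‖ ^ 2
        * ‖η x‖ ^ 2) = fun x => HRe x + (K - lam.re) * G x := by
      funext x
      simp only [hHdef, hGdef, Complex.sq_norm]
      have h := (hnspos x).ne'
      field_simp
      ring
    rw [heq, integral_add hHint (hGint.const_mul _), integral_const_mul, hGzero, hHI]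
    ring
  · -- positive part
    by_contra h
    push_neg at h
    have hz : μ {x | 0 < B x ∧ η x ≠ 0} = 0 := le_antisymm h zero_le
    have hae : ∀ᵐ x ∂μ, ¬(0 < B x ∧ η x ≠ 0) := by
      rw [ae_iff]; simpa using hz
    have hGle : ∀ᵐ x ∂μ, G x ≤ 0 := by
      filter_upwards [hae] with x hx
      rcases not_and_or.mp hx with hb | hη0
      · push_neg at hb
        exact mul_nonpos_of_nonpos_of_nonneg
          (div_nonpos_of_nonpos_of_nonneg hb (hnspos x).le) (by positivity)
      · push_neg at hη0
        simp [hGdef, hη0]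
    apply contra
    have hneg : 0 ≤ᵐ[μ] fun x => -G x := hGle.mono fun x hx => by simpa using hx
    have hiz : ∫ x, -G x ∂μ = 0 := by rw [integral_neg, hGzero, neg_zero]
    have := (integral_eq_zero_iff_of_nonneg_ae hneg hGint.neg).mp hiz
    filter_upwards [this] with x hx
    simpa using hx
  · -- negative part
    by_contra h
    push_neg at h
    have hz : μ {x | B x < 0 ∧ η x ≠ 0} = 0 := le_antisymm h zero_le
    have hae : ∀ᵐ x ∂μ, ¬(B x < 0 ∧ η x ≠ 0) := by
      rw [ae_iff]; simpa using hz
    have hGle : ∀ᵐ x ∂μ, 0 ≤ G x := by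
      filter_upwards [hae] with x hx
      rcases not_and_or.mp hx with hb | hη0
      · push_neg at hb
        exact mul_nonneg (div_nonneg hb (hnspos x).le) (by positivity)
      · push_neg at hη0
        simp [hGdef, hη0]
    exact contra ((integral_eq_zero_iff_of_nonneg_ae hGle hGint).mp hGzero)
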